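/- Let X be a dominating set of G and v ∈ cand(X). Then cand(X) \ cand(X \ {v}) equals Del1(X,v) ∪ Del2(X,v) ∪ Del3(X,v), where Del1(X,v) = {u ∈ cand(X), u < v : N[u] ∩ X = {u,v}}, Del2(X,v) = {u ∈ cand(X), u < v : ∃ w ∈ V \ (X \ {v}) with N[w] ∩ X = {u,v}}, and Del3(X,v) = {u ∈ cand(X) : u ≥ v}. -/

import Mathlib

open scoped Classical

def Dom {V : Type*} (G : SimpleGraph V) (D : Finset V) : Prop :=
  ∀ v : V, v ∈ D ∨ ∃ u ∈ D, G.Adj v u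

/-- The parent of a dominating set `X ≠ univ`: add the minimum vertex outside `X`.
    (`univ` is mapped to itself.) -/
def Parent {V : Type*} [Fintype V] [LinearOrder V] (X : Finset V) : Finset V :=
  if h : X = Finset.univ then X
  else insert ((Finset.univ \ X).min' (Finset.sdiff_nonempty.mpr
    fun hsub => h (Finset.univ_subset_iff.mp hsub))) X

/-- The candidate set of `X`. -/
def cand {V : Type*} [Fintype V] [LinearOrder V] (G : SimpleGraph V) (X : Finset V) : Set V :=
  {v | Dom G (X.erase v) ∧ Parent (X.erase v) = X}

/-- Closed neighborhood of a vertex, as a set. -/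
def clN {V : Type*} (G : SimpleGraph V) (u : V) : Set V := insert u {w | G.Adj u w}

def Del1 {V : Type*} [Fintype V] [LinearOrder V] (G : SimpleGraph V)
    (X : Finset V) (v : V) : Set V :=
  {u ∈ cand G X | u < v ∧ clN G u ∩ ↑X = {u, v}}

def Del2 {V : Type*} [Fintype V] [LinearOrder V] (G : SimpleGraph V)
    (X : Finset V) (v : V) : Set V :=
  {u ∈ cand G X | u < v ∧ ∃ w : V, w ∉ X.erase v ∧ clN G w ∩ ↑X = {u, v}}

def Del3 {V : Type*} [Fintype V] [LinearOrder V] (G : SimpleGraph V)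
    (X : Finset V) (v : V) : Set V :=
  {u ∈ cand G X | v ≤ u}

/-- `cand(X) \ cand(X \ {v}) = Del1 ∪ Del2 ∪ Del3`. -/
lemma mem_clN {V : Type*} (G : SimpleGraph V) {w x : V} :
    x ∈ clN G w ↔ x = w ∨ G.Adj w x := by
  simp [clN]

lemma cand_iff {V : Type*} [Fintype V] [LinearOrder V] (G : SimpleGraph V)
    {X : Finset V} {u : V} :
    u ∈ cand G X ↔ Dom G (X.erase u) ∧ u ∈ X ∧ ∀ w, w ∉ X → u < w := by
  unfold cand Parent
  simp only [Set.mem_setOf_eq]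
  constructor
  · rintro ⟨hdom, hpar⟩
    refine ⟨hdom, ?_⟩
    split_ifs at hpar with h
    · exact absurd (h ▸ Finset.mem_univ u) (Finset.notMem_erase u X)
    · set m := (Finset.univ \ X.erase u).min' _ with hm
      have hmmem : m ∈ Finset.univ \ X.erase u := Finset.min'_mem _ _
      have hmX : m ∈ X := hpar ▸ Finset.mem_insert_self _ _
      have hmne : m ∉ X.erase u := (Finset.mem_sdiff.mp hmmem).2
      have hmu : m = u := by
        by_contra hne
        exact hmne (Finset.mem_erase.mpr ⟨hne, hmX⟩)
      refine ⟨hmu ▸ hmX, fun w hw => ?_⟩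
      have : u ≤ w := hmu ▸ Finset.min'_le _ w
        (Finset.mem_sdiff.mpr ⟨Finset.mem_univ _, fun hc => hw (Finset.mem_of_mem_erase hc)⟩)
      exact lt_of_le_of_ne this (fun he => hw (he ▸ (hmu ▸ hmX)))
  · rintro ⟨hdom, huX, hmin⟩
    refine ⟨hdom, ?_⟩
    have hne : X.erase u ≠ Finset.univ := fun h =>
      Finset.notMem_erase u X (h ▸ Finset.mem_univ u)
    rw [dif_neg hne]
    have humem : u ∈ Finset.univ \ X.erase u :=
      Finset.mem_sdiff.mpr ⟨Finset.mem_univ _, Finset.notMem_erase u X⟩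
    have hmu : (Finset.univ \ X.erase u).min' (Finset.sdiff_nonempty.mpr
        fun hsub => hne (Finset.univ_subset_iff.mp hsub)) = u := by
      apply le_antisymm (Finset.min'_le _ _ humem)
      set m := (Finset.univ \ X.erase u).min' (Finset.sdiff_nonempty.mpr
        fun hsub => hne (Finset.univ_subset_iff.mp hsub)) with hm
      have hmmem : m ∈ Finset.univ \ X.erase u := Finset.min'_mem _ _
      have hmne : m ∉ X.erase u := (Finset.mem_sdiff.mp hmmem).2
      by_cases hmX : m ∈ X
      · have : m = u := by
          by_contra hne'
          exact hmne (Finset.mem_erase.mpr ⟨hne', hmX⟩)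
        exact this.ge
      · exact (hmin m hmX).le
    rw [hmu]
    exact Finset.insert_erase huX

lemma key {V : Type*} [Fintype V] [LinearOrder V] (G : SimpleGraph V)
    {X : Finset V} {u v : V} (huv : u ≠ v)
    (hu : Dom G (X.erase u)) (hv : Dom G (X.erase v))
    (hxu : u ∈ X) (hxv : v ∈ X) :
    ¬ Dom G ((X.erase v).erase u) ↔ ∃ w, clN G w ∩ ↑X = ({u, v} : Set V) := by
  constructor
  · intro hnd
    simp only [Dom, not_forall, not_or, not_exists] at hnd
    obtain ⟨w, hwD, hwadj⟩ := hnd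
    push_neg at hwadj
    -- subset direction
    have hsub : clN G w ∩ ↑X ⊆ ({u, v} : Set V) := by
      rintro x ⟨hxcl, hxX⟩
      by_contra hx
      simp only [Set.mem_insert_iff, Set.mem_singleton_iff, not_or] at hx
      have hxD : x ∈ (X.erase v).erase u :=
        Finset.mem_erase.mpr ⟨hx.1, Finset.mem_erase.mpr ⟨hx.2, hxX⟩⟩
      rcases (mem_clN G).mp hxcl with rfl | hadj
      · exact hwD hxD
      · exact hwadj x hxD hadj
    refine ⟨w, Set.Subset.antisymm hsub ?_⟩
    have hucl : u ∈ clN G w := by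
      rcases hv w with hwm | ⟨x, hxm, hadj⟩
      · have hwX : w ∈ X := Finset.mem_of_mem_erase hwm
        have hwv : w ≠ v := (Finset.mem_erase.mp hwm).1
        have hwu : w = u := by
          by_contra hne
          exact hwD (Finset.mem_erase.mpr ⟨hne, hwm⟩)
        exact hwu ▸ (mem_clN G).mpr (Or.inl rfl)
      · have hxcl : x ∈ clN G w := (mem_clN G).mpr (Or.inr hadj)
        have := hsub ⟨hxcl, Finset.mem_of_mem_erase hxm⟩
        rcases this with rfl | rfl
        · exact hxcl
        · exact absurd rfl (Finset.mem_erase.mp hxm).1.elim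
    have hvcl : v ∈ clN G w := by
      rcases hu w with hwm | ⟨x, hxm, hadj⟩
      · have hwX : w ∈ X := Finset.mem_of_mem_erase hwm
        have hwu : w ≠ u := (Finset.mem_erase.mp hwm).1
        have hwv : w = v := by
          by_contra hne
          exact hwD (Finset.mem_erase.mpr ⟨hwu, Finset.mem_erase.mpr ⟨hne, hwX⟩⟩)
        exact hwv ▸ (mem_clN G).mpr (Or.inl rfl)
      · have hxcl : x ∈ clN G w := (mem_clN G).mpr (Or.inr hadj)
        have := hsub ⟨hxcl, Finset.mem_of_mem_erase hxm⟩
        rcases this with rfl | rfl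
        · exact absurd rfl (Finset.mem_erase.mp hxm).1.elim
        · exact hxcl
    rintro x (rfl | rfl)
    · exact ⟨hucl, hxu⟩
    · exact ⟨hvcl, hxv⟩
  · rintro ⟨w, hw⟩ hdom
    rcases hdom w with hwD | ⟨x, hxD, hadj⟩
    · have hwX : w ∈ X := Finset.mem_of_mem_erase (Finset.mem_of_mem_erase hwD)
      have : w ∈ ({u, v} : Set V) := hw ▸ ⟨(mem_clN G).mpr (Or.inl rfl), hwX⟩
      rcases this with rfl | rfl
      · exact (Finset.mem_erase.mp hwD).1 rfl
      · exact (Finset.mem_erase.mp (Finset.mem_of_mem_erase hwD)).1 rfl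
    · have hxX : x ∈ X := Finset.mem_of_mem_erase (Finset.mem_of_mem_erase hxD)
      have : x ∈ ({u, v} : Set V) := hw ▸ ⟨(mem_clN G).mpr (Or.inr hadj), hxX⟩
      rcases this with rfl | rfl
      · exact (Finset.mem_erase.mp hxD).1 rfl
      · exact (Finset.mem_erase.mp (Finset.mem_of_mem_erase hxD)).1 rfl
theorem cand_diff_eq {V : Type*} [Fintype V] [LinearOrder V] (G : SimpleGraph V)
    (X : Finset V) (v : V) (hX : Dom G X) (hv : v ∈ cand G X) :
    cand G X \ cand G (X.erase v) = Del1 G X v ∪ Del2 G X v ∪ Del3 G X v := by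
  obtain ⟨hvd, hvX, hvmin⟩ := (cand_iff G).mp hv
  have hcY : ∀ u, u ∈ cand G (X.erase v) → u < v := by
    intro u hu
    obtain ⟨-, huY, humin⟩ := (cand_iff G).mp hu
    exact humin v (Finset.notMem_erase v X)
  ext u
  simp only [Set.mem_diff, Del1, Del2, Del3, Set.mem_union, Set.mem_setOf_eq,
    Set.mem_sep_iff]
  constructor
  · rintro ⟨hcX, hnc⟩
    rcases le_or_gt v u with hle | hlt
    · exact Or.inr ⟨hcX, hle⟩
    obtain ⟨hud, huX, humin⟩ := (cand_iff G).mp hcX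
    have huv : u ≠ v := hlt.ne
    have hndom : ¬ Dom G ((X.erase v).erase u) := by
      intro hd
      apply hnc
      refine (cand_iff G).mpr ⟨hd, Finset.mem_erase.mpr ⟨huv, huX⟩, fun w hw => ?_⟩
      by_cases hwX : w ∈ X
      · have : w = v := by
          by_contra hne
          exact hw (Finset.mem_erase.mpr ⟨hne, hwX⟩)
        exact this ▸ hlt
      · exact humin w hwX
    obtain ⟨w, hw⟩ := (key G huv hud hvd huX hvX).mp hndom
    by_cases hwu : w = u
    · exact Or.inl (Or.inl ⟨hcX, hlt, hwu ▸ hw⟩)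
    · refine Or.inl (Or.inr ⟨hcX, hlt, w, ?_, hw⟩)
      intro hwY
      have hwX : w ∈ X := Finset.mem_of_mem_erase hwY
      have : w ∈ ({u, v} : Set V) := hw ▸ ⟨(mem_clN G).mpr (Or.inl rfl), hwX⟩
      rcases this with rfl | rfl
      · exact hwu rfl
      · exact (Finset.mem_erase.mp hwY).1 rfl
  · have notY : ∀ {w : V}, u < v → clN G w ∩ ↑X = ({u, v} : Set V) →
        Dom G (X.erase u) → u ∉ cand G (X.erase v) := by
      intro w hlt hw hud hc
      obtain ⟨hd, -, -⟩ := (cand_iff G).mp hc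
      exact (key G hlt.ne hud hvd ((Set.ext_iff.mp hw u).mpr (Or.inl rfl)).2 hvX).mpr
        ⟨w, hw⟩ hd
    rintro ((⟨hcX, hlt, hset⟩ | ⟨hcX, hlt, w, hwY, hset⟩) | ⟨hcX, hle⟩)
    · exact ⟨hcX, notY hlt hset ((cand_iff G).mp hcX).1⟩
    · exact ⟨hcX, notY hlt hset ((cand_iff G).mp hcX).1⟩
    · exact ⟨hcX, fun hc => absurd (hcY u hc) (not_lt.mpr hle)⟩
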